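/- arXiv:2006.03142 — 5 statements merged into one kernel-verified Lean document; each statement's English description precedes it below -/
import Mathlib

section
/- Let x be a decision node and i a buyer. If κ_i(x) < t then μ_i(x + e_{−i}) = μ_i(x), and if κ_i(x) = t then μ_i(x + e_{−i}) < μ_i(x). Moreover, if κ_i(x) > 0 then μ_i(x + e_i) ≥ μ_i(x) − v_i(1|x) + β_i(x). -/
open Finset

noncomputable section

/-- The opponent of buyer `i`. -/
def other (i : Fin 2) : Fin 2 := 1 - i

/-- The standard unit vector of buyer `i`: winning one item moves `x` to `x + e i`. -/
def e (i : Fin 2) : Fin 2 → ℕ := Pi.single i 1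

/-- Remaining supply `t(x) = T - x₁ - x₂` at node `x`. -/
def supply (T : ℕ) (x : Fin 2 → ℕ) : ℕ := T - (x 0 + x 1)

/-- `x` is a decision node: `x₁ + x₂ < T`. -/
def IsDecision (T : ℕ) (x : Fin 2 → ℕ) : Prop := x 0 + x 1 < T

/-- Incremental value `v_i(k|x) = v_i(x_i + k)`. -/
def val (v : Fin 2 → ℕ → ℝ) (i : Fin 2) (k : ℕ) (x : Fin 2 → ℕ) : ℝ := v i (x i + k)

/-- Valuations are nonnegative and weakly decreasing. -/
def Admissible (v : Fin 2 → ℕ → ℝ) : Prop := ∀ i k, 0 ≤ v i k ∧ v i (k + 1) ≤ v i k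

/-- Greedy payoff `μ̄_i(k|x) = Σ_{j=1}^k v_i(j|x) - k · v_{-i}(t-k+1|x)`. -/
def gbar (T : ℕ) (v : Fin 2 → ℕ → ℝ) (i : Fin 2) (k : ℕ) (x : Fin 2 → ℕ) : ℝ :=
  (∑ j ∈ Finset.Icc 1 k, val v i j x) - (k : ℝ) * val v (other i) (supply T x - k + 1) x

/-- Greedy utility `μ_i(x) = max_{0 ≤ k ≤ t} μ̄_i(k|x)` (equal to `0` at terminal nodes). -/
def gu (T : ℕ) (v : Fin 2 → ℕ → ℝ) (i : Fin 2) (x : Fin 2 → ℕ) : ℝ :=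
  Finset.sup' (Finset.range (supply T x + 1)) ⟨0, Finset.mem_range.mpr (Nat.succ_pos _)⟩
    (fun k => gbar T v i k x)

/-- Greedy demand `κ_i(x)`: the least `k ∈ {0,…,t}` attaining the greedy utility. -/
def gd (T : ℕ) (v : Fin 2 → ℕ → ℝ) (i : Fin 2) (x : Fin 2 → ℕ) : ℕ :=
  sInf {k | k ≤ supply T x ∧ gbar T v i k x = gu T v i x}

/-- Duopsony factor `f_i(x) = max ({k ∈ {1,…,t} : v_i(k|x) > v_{-i}(t-k+1|x)} ∪ {0})`. -/
def df (T : ℕ) (v : Fin 2 → ℕ → ℝ) (i : Fin 2) (x : Fin 2 → ℕ) : ℕ :=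
  sSup {k | 1 ≤ k ∧ k ≤ supply T x ∧
    val v (other i) (supply T x - k + 1) x < val v i k x}

/-- Baseline price `β_i(x)`. -/
def base (T : ℕ) (v : Fin 2 → ℕ → ℝ) (i : Fin 2) (x : Fin 2 → ℕ) : ℝ :=
  if df T v i x = 0 then val v i 1 x
  else val v (other i) (supply T x - gd T v i x + 1) x

/-- Threshold price `p_i(x) = v_i(1|x) + μ_i(x+e_i) - μ_i(x+e_{-i})`. -/
def tp (T : ℕ) (v : Fin 2 → ℕ → ℝ) (i : Fin 2) (x : Fin 2 → ℕ) : ℝ :=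
  val v i 1 x + gu T v i (x + e i) - gu T v i (x + e (other i))

/- Auxiliary lemmas -/

lemma other_ne (i : Fin 2) : other i ≠ i := by fin_cases i <;> decide

lemma add_e_self (x : Fin 2 → ℕ) (i : Fin 2) : (x + e i) i = x i + 1 := by
  simp [e, Pi.single_apply]

lemma add_e_ne (x : Fin 2 → ℕ) (i j : Fin 2) (h : j ≠ i) : (x + e i) j = x j := by
  simp [e, Pi.single_apply, h]

lemma supply_add_e (T : ℕ) (x : Fin 2 → ℕ) (j : Fin 2) :
    supply T (x + e j) = supply T x - 1 := by
  have h : (x + e j) 0 + (x + e j) 1 = x 0 + x 1 + 1 := by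
    fin_cases j <;> simp [e, Pi.single_apply] <;> omega
  unfold supply
  omega

lemma sum_shift (f : ℕ → ℝ) (m : ℕ) (hm : 1 ≤ m) :
    ∑ j ∈ Finset.Icc 1 (m-1), f (j+1) = (∑ j ∈ Finset.Icc 1 m, f j) - f 1 := by
  obtain ⟨n, rfl⟩ : ∃ n, m = n + 1 := ⟨m - 1, by omega⟩
  simp only [Nat.add_sub_cancel]
  induction n with
  | zero => simp
  | succ n ih =>
      rw [Finset.sum_Icc_succ_top (by omega : 1 ≤ n + 1),
          Finset.sum_Icc_succ_top (by omega : 1 ≤ n + 1 + 1), ih (by omega)]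
      ring

lemma sum_top (f : ℕ → ℝ) (m : ℕ) (hm : 1 ≤ m) :
    ∑ j ∈ Finset.Icc 1 m, f j = (∑ j ∈ Finset.Icc 1 (m-1), f j) + f m := by
  obtain ⟨n, rfl⟩ : ∃ n, m = n + 1 := ⟨m - 1, by omega⟩
  rw [Finset.sum_Icc_succ_top (by omega : 1 ≤ n + 1)]
  simp

/-- Evolution of the greedy utility. -/
theorem stmt3 (T : ℕ) (v : Fin 2 → ℕ → ℝ) (hv : Admissible v)
    (x : Fin 2 → ℕ) (hx : IsDecision T x) (i : Fin 2) :
    (gd T v i x < supply T x → gu T v i (x + e (other i)) = gu T v i x) ∧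
    (gd T v i x = supply T x → gu T v i (x + e (other i)) < gu T v i x) ∧
    (0 < gd T v i x →
      gu T v i (x + e i) ≥ gu T v i x - val v i 1 x + base T v i x) := by
  have ht : 1 ≤ supply T x := by
    unfold IsDecision at hx; unfold supply; omega
  -- membership / minimality facts for the greedy demand
  have hAne : {k | k ≤ supply T x ∧ gbar T v i k x = gu T v i x}.Nonempty := by
    obtain ⟨b, hb, hbe⟩ := Finset.exists_mem_eq_sup'
      (Finset.nonempty_range_add_one (n := supply T x)) (fun k => gbar T v i k x)
    exact ⟨b, Nat.lt_succ_iff.mp (Finset.mem_range.mp hb), hbe.symm⟩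
  have hκmem : gd T v i x ∈ {k | k ≤ supply T x ∧ gbar T v i k x = gu T v i x} :=
    Nat.sInf_mem hAne
  have hκle : gd T v i x ≤ supply T x := hκmem.1
  have hκeq : gbar T v i (gd T v i x) x = gu T v i x := hκmem.2
  have hle : ∀ k, k ≤ supply T x → gbar T v i k x ≤ gu T v i x := by
    intro k hk
    exact Finset.le_sup' (fun k => gbar T v i k x)
      (Finset.mem_range.mpr (by omega))
  have hlt : ∀ k, k < gd T v i x → gbar T v i k x < gu T v i x := by
    intro k hk
    have hkt : k ≤ supply T x := by omega
    refine lt_of_le_of_ne (hle k hkt) ?_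
    intro heq
    have hmem : k ∈ {k | k ≤ supply T x ∧ gbar T v i k x = gu T v i x} := ⟨hkt, heq⟩
    have hge : gd T v i x ≤ k := Nat.sInf_le hmem
    omega
  -- value transfer lemmas
  have hvi : ∀ m, val v i m (x + e (other i)) = val v i m x := by
    intro m; unfold _root_.val; rw [add_e_ne x (other i) i (Ne.symm (other_ne i))]
  have hvo : ∀ m, val v (other i) m (x + e (other i)) = val v (other i) (m+1) x := by
    intro m; unfold _root_.val; rw [add_e_self]; congr 1; omega
  have hvi' : ∀ m, val v i m (x + e i) = val v i (m+1) x := by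
    intro m; unfold _root_.val; rw [add_e_self]; congr 1; omega
  have hvo' : ∀ m, val v (other i) m (x + e i) = val v (other i) m x := by
    intro m; unfold _root_.val; rw [add_e_ne x i (other i) (other_ne i)]
  -- gbar at x + e (other i)
  have hg1 : ∀ k, k + 1 ≤ supply T x →
      gbar T v i k (x + e (other i)) = gbar T v i k x := by
    intro k hk
    unfold gbar
    rw [supply_add_e]
    congr 1
    · exact Finset.sum_congr rfl fun j _ => hvi j
    · rw [hvo]
      congr 2
      omega
  -- gbar at x + e i, at demand gd - 1
  have hg2 : 0 < gd T v i x →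
      gbar T v i (gd T v i x - 1) (x + e i) =
        gu T v i x - val v i 1 x
          + val v (other i) (supply T x - gd T v i x + 1) x := by
    intro hκ0
    unfold gbar
    rw [supply_add_e]
    have hsum : ∑ j ∈ Finset.Icc 1 (gd T v i x - 1), val v i j (x + e i)
        = (∑ j ∈ Finset.Icc 1 (gd T v i x), val v i j x) - val v i 1 x := by
      rw [Finset.sum_congr rfl fun j _ => hvi' j]
      exact sum_shift (fun j => val v i j x) _ hκ0
    rw [hsum, hvo']
    have hidx : supply T x - 1 - (gd T v i x - 1) + 1 = supply T x - gd T v i x + 1 := by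
      omega
    rw [hidx]
    have hgu : gu T v i x = (∑ j ∈ Finset.Icc 1 (gd T v i x), val v i j x)
        - (gd T v i x : ℝ) * val v (other i) (supply T x - gd T v i x + 1) x := by
      rw [← hκeq]; rfl
    rw [hgu]
    have hcast : ((gd T v i x - 1 : ℕ) : ℝ) = (gd T v i x : ℝ) - 1 := by
      have := Nat.cast_sub (R := ℝ) hκ0
      simpa using this
    rw [hcast]
    ring
  refine ⟨?_, ?_, ?_⟩
  · -- gd < t : utility unchanged at x + e (other i)
    intro h1
    apply le_antisymm
    · unfold gu
      apply Finset.sup'_le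
      intro k hk
      have hk' : k + 1 ≤ supply T x := by
        have := Finset.mem_range.mp hk
        rw [supply_add_e] at this
        omega
      rw [hg1 k hk']
      exact hle k (by omega)
    · calc gu T v i x = gbar T v i (gd T v i x) x := hκeq.symm
        _ = gbar T v i (gd T v i x) (x + e (other i)) := (hg1 _ (by omega)).symm
        _ ≤ gu T v i (x + e (other i)) := by
            apply Finset.le_sup' (fun k => gbar T v i k (x + e (other i)))
            rw [Finset.mem_range, supply_add_e]
            omega
  · -- gd = t : utility strictly drops at x + e (other i)
    intro h2
    unfold gu
    apply (Finset.sup'_lt_iff _).mpr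
    intro k hk
    have hk' : k + 1 ≤ supply T x := by
      have := Finset.mem_range.mp hk
      rw [supply_add_e] at this
      omega
    rw [hg1 k hk']
    exact hlt k (by omega)
  · -- gd > 0
    intro hκ0
    -- strict increment at gd: the opponent price is beaten
    have hstrict : gbar T v i (gd T v i x - 1) x < gbar T v i (gd T v i x) x := by
      rw [hκeq]; exact hlt _ (by omega)
    have hba : val v (other i) (supply T x - gd T v i x + 1) x < val v i (gd T v i x) x := by
      unfold gbar at hstrict
      rw [sum_top (fun j => val v i j x) _ hκ0] at hstrict
      have hidx : supply T x - (gd T v i x - 1) + 1 = (supply T x - gd T v i x + 1) + 1 := by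
        omega
      rw [hidx] at hstrict
      have hdec : val v (other i) ((supply T x - gd T v i x + 1) + 1) x
          ≤ val v (other i) (supply T x - gd T v i x + 1) x := by
        unfold _root_.val
        have := (hv (other i) (x (other i) + (supply T x - gd T v i x + 1))).2
        calc v (other i) (x (other i) + (supply T x - gd T v i x + 1 + 1))
            = v (other i) (x (other i) + (supply T x - gd T v i x + 1) + 1) := by ring_nf
          _ ≤ _ := this
      have hcast : ((gd T v i x - 1 : ℕ) : ℝ) = (gd T v i x : ℝ) - 1 := by
        have := Nat.cast_sub (R := ℝ) hκ0
        simpa using this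
      rw [hcast] at hstrict
      have hκ1 : (1 : ℝ) ≤ (gd T v i x : ℝ) := by exact_mod_cast hκ0
      nlinarith [hstrict, hdec, hκ1]
    -- the duopsony factor is positive, so base takes the second branch
    have hbdd : BddAbove {k | 1 ≤ k ∧ k ≤ supply T x ∧
        val v (other i) (supply T x - k + 1) x < val v i k x} :=
      ⟨supply T x, fun k hk => hk.2.1⟩
    have hmemS : gd T v i x ∈ {k | 1 ≤ k ∧ k ≤ supply T x ∧
        val v (other i) (supply T x - k + 1) x < val v i k x} := ⟨hκ0, hκle, hba⟩
    have hdfpos : 0 < df T v i x := lt_of_lt_of_le hκ0 (le_csSup hbdd hmemS)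
    have hbase : base T v i x = val v (other i) (supply T x - gd T v i x + 1) x := by
      unfold base
      rw [if_neg (by omega)]
    rw [hbase, ← hg2 hκ0]
    apply Finset.le_sup' (fun k => gbar T v i k (x + e i))
    rw [Finset.mem_range, supply_add_e]
    omega
end
end

section
/- Let x be a decision node and i a buyer. If the greedy demand of buyer i is the entire remaining supply, κ_i(x) = t, then the threshold price is strictly greater than the baseline price: p_i(x) > β_i(x). -/
open Finset

noncomputable section

/-- Auxiliary: sum over `Icc 1 k` as a sum over `range k`. -/
lemma sumIcc_aux (f : ℕ → ℝ) (k : ℕ) :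
    ∑ j ∈ Finset.Icc 1 k, f j = ∑ j ∈ Finset.range k, f (1 + j) := by
  rw [← Finset.Ico_add_one_right_eq_Icc, Finset.sum_Ico_eq_sum_range]
  simp

/-- If the greedy demand is the entire remaining supply, the threshold price is
strictly greater than the baseline price. -/
theorem stmt6 (T : ℕ) (v : Fin 2 → ℕ → ℝ) (hv : Admissible v)
    (x : Fin 2 → ℕ) (hx : IsDecision T x) (i : Fin 2)
    (h : gd T v i x = supply T x) :
    base T v i x < tp T v i x := by

  have hmono : ∀ j : Fin 2, ∀ a b : ℕ, a ≤ b → v j b ≤ v j a := by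
    intro j a b hab
    induction b, hab using Nat.le_induction with
    | base => exact le_refl _
    | succ n hn ih => exact le_trans (hv j n).2 ih
  have hne : other i ≠ i := by fin_cases i <;> decide
  have hxT : x 0 + x 1 < T := hx
  obtain ⟨s, hs⟩ : ∃ s, supply T x = s + 1 := by
    refine ⟨supply T x - 1, ?_⟩
    simp only [supply]; omega
  have heii : e i i = 1 := Pi.single_eq_same i 1
  have heio : e i (other i) = 0 := Pi.single_eq_of_ne hne 1
  have heoo : e (other i) (other i) = 1 := Pi.single_eq_same (other i) 1
  have heoi : e (other i) i = 0 := Pi.single_eq_of_ne (Ne.symm hne) 1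
  have sum01 : ∀ j : Fin 2, e j 0 + e j 1 = 1 := by
    intro j; fin_cases j <;> simp [e]
  have hsupi : supply T (x + e i) = s := by
    have h1 := sum01 i
    simp only [supply, Pi.add_apply] at hs ⊢
    omega
  have hsupo : supply T (x + e (other i)) = s := by
    have h1 := sum01 (other i)
    simp only [supply, Pi.add_apply] at hs ⊢
    omega
  -- the attainment set
  set S : Set ℕ := {k | k ≤ supply T x ∧ gbar T v i k x = gu T v i x} with hS
  have hSne : S.Nonempty := by
    obtain ⟨k, hk, hk2⟩ := Finset.exists_mem_eq_sup' (Finset.nonempty_range_add_one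
      (n := supply T x)) (fun k => gbar T v i k x)
    exact ⟨k, by simp only [Finset.mem_range] at hk; omega, hk2.symm⟩
  have hgd : sInf S = supply T x := h
  have hA : gbar T v i (supply T x) x = gu T v i x := by
    have hmem := Nat.sInf_mem hSne
    rw [hgd] at hmem
    exact hmem.2
  have hB : ∀ k, k < supply T x → gbar T v i k x < gu T v i x := by
    intro k hk
    have hle : gbar T v i k x ≤ gu T v i x := by
      rw [gu]
      have hkmem : k ∈ Finset.range (supply T x + 1) := Finset.mem_range.mpr (by omega)
      exact Finset.le_sup' (fun k => gbar T v i k x) hkmem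
    rcases lt_or_eq_of_le hle with hlt | heq
    · exact hlt
    · exfalso
      have hkS : k ∈ S := ⟨le_of_lt hk, heq⟩
      have := Nat.sInf_le hkS
      omega
  -- duopsony factor positive
  have hdf : df T v i x ≠ 0 := by
    intro h0
    have hDempty : ∀ k, 1 ≤ k → k ≤ supply T x →
        val v i k x ≤ val v (other i) (supply T x - k + 1) x := by
      intro k h1 h2
      by_contra hcon
      push_neg at hcon
      have hkD : k ∈ {k | 1 ≤ k ∧ k ≤ supply T x ∧
          val v (other i) (supply T x - k + 1) x < val v i k x} := ⟨h1, h2, hcon⟩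
      have hbdd : BddAbove {k | 1 ≤ k ∧ k ≤ supply T x ∧
          val v (other i) (supply T x - k + 1) x < val v i k x} :=
        ⟨supply T x, fun m hm => hm.2.1⟩
      have hmem := Nat.sSup_mem ⟨k, hkD⟩ hbdd
      rw [df] at h0
      rw [h0] at hmem
      exact absurd hmem.1 (by omega)
    have h1 : gbar T v i (supply T x) x ≤ 0 := by
      rw [gbar]
      have hsum : ∑ j ∈ Finset.Icc 1 (supply T x), val v i j x ≤
          (supply T x : ℝ) * val v (other i) 1 x := by
        calc ∑ j ∈ Finset.Icc 1 (supply T x), val v i j x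
            ≤ ∑ _j ∈ Finset.Icc 1 (supply T x), val v (other i) 1 x := by
              apply Finset.sum_le_sum
              intro j hj
              simp only [Finset.mem_Icc] at hj
              refine le_trans (hDempty j hj.1 hj.2) ?_
              simp only [_root_.val]
              apply hmono
              omega
          _ = (supply T x : ℝ) * val v (other i) 1 x := by
              rw [Finset.sum_const, Nat.card_Icc]
              simp [nsmul_eq_mul]
      have hidx : supply T x - supply T x + 1 = 1 := by omega
      rw [hidx]
      linarith
    have h2 : (0:ℝ) < gbar T v i (supply T x) x := by
      have hb0 := hB 0 (by omega)
      have hz : gbar T v i 0 x = 0 := by simp [gbar]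
      rw [hz] at hb0
      rw [hA]
      exact hb0
    linarith
  have hbase : base T v i x = val v (other i) 1 x := by
    rw [base, if_neg hdf, h]
    congr 1
    omega
  -- gu at x + e (other i)
  have heqo : ∀ k, k ≤ s → gbar T v i k (x + e (other i)) = gbar T v i k x := by
    intro k hk
    unfold gbar
    have hsum : ∑ j ∈ Finset.Icc 1 k, val v i j (x + e (other i)) =
        ∑ j ∈ Finset.Icc 1 k, val v i j x := by
      apply Finset.sum_congr rfl
      intro j _
      simp only [_root_.val, Pi.add_apply, heoi, Nat.add_zero]
    have hprice : val v (other i) (supply T (x + e (other i)) - k + 1) (x + e (other i)) =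
        val v (other i) (supply T x - k + 1) x := by
      simp only [_root_.val]
      rw [Pi.add_apply, heoo, hsupo]
      congr 1
      omega
    rw [hsum, hprice]
  have hC : gu T v i (x + e (other i)) < gu T v i x := by
    rw [gu]
    apply (Finset.sup'_lt_iff _).mpr
    intro k hk
    rw [hsupo, Finset.mem_range] at hk
    rw [heqo k (by omega)]
    exact hB k (by omega)
  -- gu at x + e i : lower bound
  have hE : gbar T v i s (x + e i) =
      gbar T v i (supply T x) x - val v i 1 x + val v (other i) 1 x := by
    unfold gbar
    rw [hsupi, hs]
    have hsum2 : ∑ j ∈ Finset.Icc 1 (s+1), val v i j x =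
        val v i 1 x + ∑ j ∈ Finset.Icc 1 s, val v i j (x + e i) := by
      simp only [_root_.val]
      rw [sumIcc_aux, sumIcc_aux, Finset.sum_range_succ']
      simp only [Pi.add_apply, heii]
      have hterm : ∑ j ∈ Finset.range s, v i (x i + (1 + (j + 1))) =
          ∑ j ∈ Finset.range s, v i (x i + 1 + (1 + j)) :=
        Finset.sum_congr rfl (fun j _ => by congr 1; omega)
      rw [hterm, show x i + (1 + 0) = x i + 1 from by omega, add_comm]
    have hp1 : val v (other i) (s - s + 1) (x + e i) = val v (other i) 1 x := by
      simp only [_root_.val]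
      rw [Pi.add_apply, heio]
      congr 1
      omega
    have hp2 : val v (other i) (s + 1 - (s + 1) + 1) x = val v (other i) 1 x := by
      congr 1
      omega
    rw [hsum2, hp1, hp2]
    push_cast
    ring
  have hD : gbar T v i s (x + e i) ≤ gu T v i (x + e i) := by
    rw [gu]
    exact Finset.le_sup' (fun k => gbar T v i k (x + e i))
      (by rw [hsupi]; exact Finset.self_mem_range_succ s)
  rw [tp, hbase]
  have h2 : gu T v i x - val v i 1 x + val v (other i) 1 x ≤ gu T v i (x + e i) := by
    rw [← hA, ← hE]
    exact hD
  linarith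
end
end

section
/- Declining price anomaly: in the no-overbidding equilibrium with any tie-breaking rule, prices are non-increasing along any realized equilibrium path. Formally, for every decision node x with remaining supply t > 1 and every buyer j, if buyer j wins at x with positive probability (q_j(x) > 0), then p(x) ≥ p(x + e_j). -/
open Finset

noncomputable section

/-- A tie-breaking rule: probabilities assigned to the two buyers at each decision node. -/
def TieBreaking (T : ℕ) (π : Fin 2 → (Fin 2 → ℕ) → ℝ) : Prop :=
  ∀ x : Fin 2 → ℕ, IsDecision T x →
    (∀ i, 0 ≤ π i x ∧ π i x ≤ 1) ∧ π 0 x + π 1 x = 1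

/-- The no-overbidding equilibrium for the tie-breaking rule `π`, described by its
forward utilities `u`, bids `b` and winning probabilities `q`, which satisfy the
defining backward recursion. -/
structure Equilibrium (T : ℕ) (v : Fin 2 → ℕ → ℝ) (π : Fin 2 → (Fin 2 → ℕ) → ℝ) where
  u : Fin 2 → (Fin 2 → ℕ) → ℝ
  b : Fin 2 → (Fin 2 → ℕ) → ℝ
  q : Fin 2 → (Fin 2 → ℕ) → ℝ
  u_terminal : ∀ i x, ¬ IsDecision T x → u i x = 0
  bid_def : ∀ i x, IsDecision T x →
    b i x = min (val v i 1 x) (val v i 1 x + u i (x + e i) - u i (x + e (other i)))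
  q_win : ∀ i x, IsDecision T x → b (other i) x < b i x → q i x = 1
  q_lose : ∀ i x, IsDecision T x → b i x < b (other i) x → q i x = 0
  q_tie : ∀ i x, IsDecision T x → b i x = b (other i) x → q i x = π i x
  u_def : ∀ i x, IsDecision T x →
    u i x = q i x * (val v i 1 x - b (other i) x + u i (x + e i))
            + (1 - q i x) * u i (x + e (other i))

/-- The price paid at node `x`: the lower of the two bids. -/
def price {T : ℕ} {v : Fin 2 → ℕ → ℝ} {π : Fin 2 → (Fin 2 → ℕ) → ℝ}
    (E : Equilibrium T v π) (x : Fin 2 → ℕ) : ℝ := min (E.b 0 x) (E.b 1 x)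

lemma other_other (i : Fin 2) : other (other i) = i := by fin_cases i <;> rfl

lemma q_bounds {T : ℕ} {v : Fin 2 → ℕ → ℝ} {π : Fin 2 → (Fin 2 → ℕ) → ℝ}
    (hπ : TieBreaking T π) (E : Equilibrium T v π) {x : Fin 2 → ℕ}
    (hx : IsDecision T x) (i : Fin 2) : 0 ≤ E.q i x ∧ E.q i x ≤ 1 := by
  rcases lt_trichotomy (E.b i x) (E.b (other i) x) with h | h | h
  · rw [E.q_lose i x hx h]; norm_num
  · rw [E.q_tie i x hx h]; exact ((hπ x hx).1 i)
  · rw [E.q_win i x hx h]; norm_num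

lemma bid_le_val {T : ℕ} {v : Fin 2 → ℕ → ℝ} {π : Fin 2 → (Fin 2 → ℕ) → ℝ}
    (E : Equilibrium T v π) {x : Fin 2 → ℕ} (hx : IsDecision T x) (i : Fin 2) :
    E.b i x ≤ val v i 1 x := by
  rw [E.bid_def i x hx]; exact min_le_left _ _

lemma bid_le_second {T : ℕ} {v : Fin 2 → ℕ → ℝ} {π : Fin 2 → (Fin 2 → ℕ) → ℝ}
    (E : Equilibrium T v π) {x : Fin 2 → ℕ} (hx : IsDecision T x) (i : Fin 2) :
    E.b i x ≤ val v i 1 x + E.u i (x + e i) - E.u i (x + e (other i)) := by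
  rw [E.bid_def i x hx]; exact min_le_right _ _

/-- Key invariant: a buyer's utility weakly decreases when the opponent wins an item. -/
lemma u_mono {T : ℕ} {v : Fin 2 → ℕ → ℝ} {π : Fin 2 → (Fin 2 → ℕ) → ℝ}
    (hπ : TieBreaking T π) (E : Equilibrium T v π) {x : Fin 2 → ℕ}
    (hx : IsDecision T x) (i : Fin 2) :
    E.u i (x + e (other i)) ≤ E.u i x := by
  have hu := E.u_def i x hx
  rcases le_or_gt (E.b (other i) x) (E.b i x) with h | h
  · have hb := bid_le_second E hx i
    have hq := q_bounds hπ E hx i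
    nlinarith [mul_nonneg hq.1 (by linarith :
      (0:ℝ) ≤ val v i 1 x - E.b (other i) x + E.u i (x + e i) - E.u i (x + e (other i)))]
  · rw [E.q_lose i x hx h] at hu
    rw [hu]; ring_nf; exact le_refl _

lemma price_le_b {T : ℕ} {v : Fin 2 → ℕ → ℝ} {π : Fin 2 → (Fin 2 → ℕ) → ℝ}
    (E : Equilibrium T v π) (x : Fin 2 → ℕ) (k : Fin 2) : price E x ≤ E.b k x := by
  fin_cases k
  · exact min_le_left _ _
  · exact min_le_right _ _

/-- The price at a decision node is at most `v_i(1|x) + u_i(x+e_i) - u_i(x)`. -/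
lemma price_le_key {T : ℕ} {v : Fin 2 → ℕ → ℝ} {π : Fin 2 → (Fin 2 → ℕ) → ℝ}
    (hπ : TieBreaking T π) (E : Equilibrium T v π) {x : Fin 2 → ℕ}
    (hx : IsDecision T x) (i : Fin 2) :
    price E x ≤ val v i 1 x + E.u i (x + e i) - E.u i x := by
  have hu := E.u_def i x hx
  rcases le_or_gt (E.b (other i) x) (E.b i x) with h | h
  · -- buyer i weakly wins; the win branch dominates, so u_i x ≤ win value
    have hb := bid_le_second E hx i
    have hq := q_bounds hπ E hx i
    have hW : E.u i x ≤ val v i 1 x - E.b (other i) x + E.u i (x + e i) := by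
      nlinarith [mul_nonneg (by linarith : (0:ℝ) ≤ 1 - E.q i x) (by linarith :
        (0:ℝ) ≤ val v i 1 x - E.b (other i) x + E.u i (x + e i) - E.u i (x + e (other i)))]
    have := price_le_b E x (other i)
    linarith
  · -- buyer i loses: u_i x equals the losing continuation
    rw [E.q_lose i x hx h] at hu
    have hb := bid_le_second E hx i
    have := price_le_b E x i
    simp only [zero_mul, sub_zero, one_mul, zero_add] at hu
    linarith [hu.ge, hu.le]

lemma min_eq_other {T : ℕ} {v : Fin 2 → ℕ → ℝ} {π : Fin 2 → (Fin 2 → ℕ) → ℝ}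
    (E : Equilibrium T v π) (x : Fin 2 → ℕ) (j : Fin 2)
    (h : E.b (other j) x ≤ E.b j x) : price E x = E.b (other j) x := by
  fin_cases j
  · exact min_eq_right h
  · exact min_eq_left h

/-- Declining price anomaly: prices are non-increasing along any realised
equilibrium path of the no-overbidding equilibrium. -/
theorem stmt11 (T : ℕ) (v : Fin 2 → ℕ → ℝ) (π : Fin 2 → (Fin 2 → ℕ) → ℝ)
    (hv : Admissible v) (hπ : TieBreaking T π) (E : Equilibrium T v π)
    (x : Fin 2 → ℕ) (hx : IsDecision T x) (ht : 1 < supply T x)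
    (j : Fin 2) (hq : 0 < E.q j x) :
    price E (x + e j) ≤ price E x := by
  set o := other j with ho
  have hoj : o ≠ j := other_ne j
  have hsum : x 0 + x 1 + 1 < T := by
    simp only [supply] at ht
    omega
  have hadd : ∀ i : Fin 2, (x + e i) 0 + (x + e i) 1 = x 0 + x 1 + 1 := by
    intro i
    fin_cases i <;> simp [e, Pi.single_apply] <;> omega
  have hdy : IsDecision T (x + e j) := by
    unfold IsDecision; rw [hadd]; exact hsum
  have hdo : IsDecision T (x + e o) := by
    unfold IsDecision; rw [hadd]; exact hsum
  have hbo : E.b o x ≤ E.b j x := by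
    by_contra hcon
    push_neg at hcon
    have := E.q_lose j x hx (by rwa [← ho])
    linarith
  have hxo : (x + e j) o = x o := by
    simp [e, Pi.single_eq_of_ne hoj]
  have hval : val v o 1 (x + e j) = val v o 1 x := by
    simp [_root_.val, hxo]
  have hpx : price E x = E.b o x := min_eq_other E x j hbo
  rw [hpx, E.bid_def o x hx, other_other]
  apply le_min
  · calc price E (x + e j) ≤ E.b o (x + e j) := price_le_b E _ o
      _ ≤ val v o 1 (x + e j) := bid_le_val E hdy o
      _ = val v o 1 x := hval
  · have hkey := price_le_key hπ E hdy o
    have hcomm : x + e j + e o = x + e o + e (other o) := by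
      rw [other_other, add_right_comm]
    have hmono : E.u o (x + e o + e (other o)) ≤ E.u o (x + e o) :=
      u_mono hπ E hdo o
    rw [hval, hcomm] at hkey
    linarith
end
end

section
/- Suppose buyer 1 is a strict monopsonist at a decision node x, i.e. f_1(x) = t. Then for every real number ℓ ∈ [0, t), (t − ℓ)·v̄_2(ℓ|x) ≥ ∫_{κ_1(x)}^{t−ℓ} v̄_1(τ|x) dτ. -/
open Finset

noncomputable section

/-- Real extension of buyer 1's incremental valuation at `x`: `v̄₁(τ|x) = v₁(⌈τ⌉|x)`. -/
def rv1 (v : Fin 2 → ℕ → ℝ) (x : Fin 2 → ℕ) (τ : ℝ) : ℝ := v 0 (x 0 + ⌈τ⌉₊)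

/-- Real extension of buyer 2's incremental valuation at `x`: `v̄₂(τ|x) = v₂(⌊τ⌋+1|x)`. -/
def rv2 (v : Fin 2 → ℕ → ℝ) (x : Fin 2 → ℕ) (τ : ℝ) : ℝ := v 1 (x 1 + ⌊τ⌋₊ + 1)


section AuxSt17
open MeasureTheory
variable (v : Fin 2 → ℕ → ℝ) (x : Fin 2 → ℕ)

lemma v_anti (hv : Admissible v) (i : Fin 2) : Antitone (v i) :=
  antitone_nat_of_succ_le (fun k => (hv i k).2)

lemma rv1_anti (hv : Admissible v) : Antitone (rv1 v x) := by
  intro a b hab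
  exact v_anti v hv 0 (Nat.add_le_add_left (Nat.ceil_mono hab) _)

lemma rv1_ii (hv : Admissible v) (a b : ℝ) : IntervalIntegrable (rv1 v x) volume a b :=
  (rv1_anti v x hv).intervalIntegrable

lemma int_const_seg (f : ℝ → ℝ) (a b c : ℝ) (h : a ≤ b) (hc : ∀ τ ∈ Set.Ioc a b, f τ = c) :
    ∫ τ in a..b, f τ = (b - a) * c := by
  rw [intervalIntegral.integral_of_le h, MeasureTheory.setIntegral_congr_fun measurableSet_Ioc hc]
  simp [Real.volume_Ioc, ENNReal.toReal_ofReal (sub_nonneg.2 h), mul_comm, h]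

lemma ceil_seg (r : ℝ) (n : ℕ) (h0 : (n:ℝ) < r) (h1 : r ≤ n+1) : ⌈r⌉₊ = n+1 := by
  rw [Nat.ceil_eq_iff (by omega)]
  exact ⟨by simpa using h0, by push_cast; linarith⟩

lemma rv1_seg (a b : ℝ) (n : ℕ) (hn : (n:ℝ) ≤ a) (hab : a ≤ b) (hb : b ≤ (n:ℝ)+1) :
    ∫ τ in a..b, rv1 v x τ = (b - a) * v 0 (x 0 + (n+1)) := by
  refine int_const_seg _ _ _ _ hab (fun τ hτ => ?_)
  unfold rv1
  rw [ceil_seg τ n (lt_of_le_of_lt hn hτ.1) (le_trans hτ.2 hb)]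

lemma rv1_intsum (hv : Admissible v) (K M : ℕ) (h : K ≤ M) :
    ∫ τ in (K:ℝ)..(M:ℝ), rv1 v x τ = ∑ j ∈ Finset.Ioc K M, v 0 (x 0 + j) := by
  induction M, h using Nat.le_induction with
  | base => simp
  | succ M hKM ih =>
    have hadd := intervalIntegral.integral_add_adjacent_intervals
      (rv1_ii v x hv (K:ℝ) (M:ℝ)) (rv1_ii v x hv (M:ℝ) ((M+1:ℕ):ℝ))
    have hseg : ∫ τ in (M:ℝ)..((M+1:ℕ):ℝ), rv1 v x τ = v 0 (x 0 + (M+1)) := by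
      rw [rv1_seg v x (M:ℝ) ((M+1:ℕ):ℝ) M le_rfl (by push_cast; linarith) (by push_cast; linarith)]
      push_cast; ring
    rw [← hadd, ih, hseg, Finset.sum_Ioc_succ_top hKM]

end AuxSt17

/-- Lower bound on buyer 2's extended incremental valuation when buyer 1 is a
strict monopsonist. -/
theorem stmt17 (T : ℕ) (v : Fin 2 → ℕ → ℝ) (hv : Admissible v)
    (x : Fin 2 → ℕ) (hx : IsDecision T x)
    (hmono : df T v 0 x = supply T x)
    (l : ℝ) (hl0 : 0 ≤ l) (hl1 : l < (supply T x : ℝ)) :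
    (∫ τ in ((gd T v 0 x : ℝ))..((supply T x : ℝ) - l), rv1 v x τ)
      ≤ ((supply T x : ℝ) - l) * rv2 v x l := by
  classical
  set t := supply T x with htdef
  set K := gd T v 0 x with hKdef
  set n := ⌊l⌋₊ with hndef
  set M := t - n with hMdef
  have ht1 : 1 ≤ t := by
    simp only [htdef, supply]
    have := hx
    unfold IsDecision at this
    omega
  have hn_lt : n < t := (Nat.floor_lt hl0).2 hl1
  have hM1 : 1 ≤ M := by omega
  have hMt : M ≤ t := by omega
  -- other 0 = 1
  have hoth : other 0 = (1 : Fin 2) := by decide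
  -- monopsonist key inequality
  have hkey : v 1 (x 1 + 1) < v 0 (x 0 + t) := by
    have hS : {k | 1 ≤ k ∧ k ≤ t ∧ val v (other 0) (t - k + 1) x < val v 0 k x}.Nonempty := by
      by_contra hne
      rw [Set.not_nonempty_iff_eq_empty] at hne
      have : df T v 0 x = 0 := by
        simp only [df, ← htdef, hne, csSup_empty]
        rfl
      omega
    have hbdd : BddAbove {k | 1 ≤ k ∧ k ≤ t ∧ val v (other 0) (t - k + 1) x < val v 0 k x} :=
      ⟨t, fun k hk => hk.2.1⟩
    have hmem := Nat.sSup_mem hS hbdd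
    have heq : sSup {k | 1 ≤ k ∧ k ≤ t ∧ val v (other 0) (t - k + 1) x < val v 0 k x} = t := hmono
    rw [heq] at hmem
    obtain ⟨-, -, hlt⟩ := hmem
    simpa [_root_.val, hoth, Nat.sub_self] using hlt
  -- strict inequality at M
  have hstrict : v 1 (x 1 + (n + 1)) < v 0 (x 0 + M) := by
    calc v 1 (x 1 + (n + 1)) ≤ v 1 (x 1 + 1) := v_anti v hv 1 (by omega)
      _ < v 0 (x 0 + t) := hkey
      _ ≤ v 0 (x 0 + M) := v_anti v hv 0 (by omega)
  -- greedy demand properties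
  have hSK : {k | k ≤ t ∧ gbar T v 0 k x = gu T v 0 x}.Nonempty := by
    obtain ⟨b, hb, hbe⟩ := Finset.exists_mem_eq_sup' (Finset.nonempty_range_add_one (n := t))
      (fun k => gbar T v 0 k x)
    exact ⟨b, Nat.lt_succ_iff.1 (Finset.mem_range.1 hb), hbe.symm⟩
  have hKmem := Nat.sInf_mem hSK
  obtain ⟨hKt, hKgu⟩ := hKmem
  have hguM : gbar T v 0 M x ≤ gu T v 0 x :=
    Finset.le_sup' (fun k => gbar T v 0 k x) (Finset.mem_range.2 (by omega))
  have hgbar : gbar T v 0 M x ≤ gbar T v 0 K x := hKgu ▸ hguM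
  -- unfold gbar inequality into a sum inequality
  have hval2 : _root_.val v (other 0) (t - M + 1) x = v 1 (x 1 + (n + 1)) := by
    simp [_root_.val, hoth]
    congr 1
    omega
  have hvalK : 0 ≤ _root_.val v (other 0) (t - K + 1) x := by
    simp only [_root_.val, hoth]
    exact (hv 1 _).1
  have hsum : ∀ N : ℕ, (∑ j ∈ Finset.Icc 1 N, _root_.val v 0 j x) = ∑ j ∈ Finset.Ioc 0 N, v 0 (x 0 + j) := by
    intro N
    rw [← Finset.Icc_add_one_left_eq_Ioc]
    rfl
  -- main case split
  rcases le_or_gt (K : ℝ) ((t : ℝ) - l) with hcase | hcase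
  · -- K ≤ s
    have hKM : K ≤ M := by
      have hsM : (t : ℝ) - l ≤ (M : ℝ) := by
        have := Nat.floor_le hl0
        rw [hMdef, Nat.cast_sub hn_lt.le]
        linarith
      exact_mod_cast le_trans hcase hsM
    have hsM : (t : ℝ) - l ≤ (M : ℝ) := by
      have := Nat.floor_le hl0
      rw [hMdef, Nat.cast_sub hn_lt.le]
      linarith
    have hMs : (M : ℝ) - 1 ≤ (t : ℝ) - l := by
      have := Nat.lt_floor_add_one l
      rw [hMdef, Nat.cast_sub hn_lt.le]
      linarith
    -- split the integral
    have hadd := intervalIntegral.integral_add_adjacent_intervals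
      (rv1_ii v x hv (K : ℝ) ((t : ℝ) - l)) (rv1_ii v x hv ((t : ℝ) - l) (M : ℝ))
    have hseg : ∫ τ in ((t : ℝ) - l)..(M : ℝ), rv1 v x τ
        = ((M : ℝ) - ((t : ℝ) - l)) * v 0 (x 0 + M) := by
      have := rv1_seg v x ((t : ℝ) - l) (M : ℝ) (M - 1)
        (by rw [Nat.cast_sub hM1]; push_cast; linarith)
        hsM (by rw [Nat.cast_sub hM1]; push_cast; linarith)
      rw [this]
      congr 2
      omega
    have hisum := rv1_intsum v x hv K M hKM
    -- greedy inequality: sum bound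
    have hgb2 : (∑ j ∈ Finset.Ioc K M, v 0 (x 0 + j)) ≤ (M : ℝ) * v 1 (x 1 + (n + 1)) := by
      have h1 : (∑ j ∈ Finset.Ioc 0 K, v 0 (x 0 + j)) + (∑ j ∈ Finset.Ioc K M, v 0 (x 0 + j))
          = ∑ j ∈ Finset.Ioc 0 M, v 0 (x 0 + j) :=
        Finset.sum_Ioc_consecutive _ (Nat.zero_le K) hKM
      have h2 := hgbar
      simp only [gbar, ← htdef, hval2, hsum] at h2
      have h3 : 0 ≤ (K : ℝ) * _root_.val v (other 0) (t - K + 1) x :=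
        mul_nonneg (Nat.cast_nonneg K) hvalK
      nlinarith [hstrict]
    have hMnonneg : (0:ℝ) ≤ (M : ℝ) - ((t : ℝ) - l) := by linarith
    have hmul : ((M : ℝ) - ((t : ℝ) - l)) * v 1 (x 1 + (n + 1))
        ≤ ((M : ℝ) - ((t : ℝ) - l)) * v 0 (x 0 + M) :=
      mul_le_mul_of_nonneg_left hstrict.le hMnonneg
    have : (∫ τ in ((K : ℝ))..((t : ℝ) - l), rv1 v x τ)
        = (∑ j ∈ Finset.Ioc K M, v 0 (x 0 + j)) - ((M : ℝ) - ((t : ℝ) - l)) * v 0 (x 0 + M) := by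
      rw [← hisum, ← hadd, hseg]; ring
    rw [this]
    have hrv2 : rv2 v x l = v 1 (x 1 + (n + 1)) := by
      simp [rv2, ← hndef, Nat.add_assoc]
    rw [hrv2]
    nlinarith
  · -- s < K : integral is nonpositive, RHS nonneg
    have h1 : (∫ τ in ((K : ℝ))..((t : ℝ) - l), rv1 v x τ)
        = -(∫ τ in ((t : ℝ) - l)..(K : ℝ), rv1 v x τ) := by
      rw [intervalIntegral.integral_symm]
    have h2 : 0 ≤ ∫ τ in ((t : ℝ) - l)..(K : ℝ), rv1 v x τ :=
      intervalIntegral.integral_nonneg hcase.le (fun τ _ => (hv 0 _).1)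
    have h3 : 0 ≤ ((t : ℝ) - l) * rv2 v x l :=
      mul_nonneg (by linarith) ((hv 1 _).1)
    linarith
end
end

section
/- Price of anarchy lower bound: suppose buyer 1 is a strict monopsonist at the initial node 0 = (0,0), i.e. f_1(0) = T with T ≥ 1. Then OPT(0) = Σ_{i=1}^{T} v_1(i), and for every integer k with κ_1(0) ≤ k ≤ T, Σ_{i=1}^{k} v_1(i) + Σ_{i=1}^{T−k} v_2(i) ≥ (1 − 1/e)·Σ_{i=1}^{T} v_1(i); that is, every allocation awarding buyer 1 at least her greedy demand κ_1(0) items achieves social welfare at least (1 − 1/e) times the optimal social welfare. -/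
open Finset

noncomputable section

/-- Social welfare of awarding `k` of the `t` remaining items to buyer 1. -/
def sw (T : ℕ) (v : Fin 2 → ℕ → ℝ) (k : ℕ) (x : Fin 2 → ℕ) : ℝ :=
  (∑ i ∈ Finset.Icc 1 k, val v 0 i x) + (∑ i ∈ Finset.Icc 1 (supply T x - k), val v 1 i x)

/-- Optimal social welfare `OPT(x) = max_{0 ≤ k ≤ t} SW(k|x)`. -/
def opt (T : ℕ) (v : Fin 2 → ℕ → ℝ) (x : Fin 2 → ℕ) : ℝ :=
  Finset.sup' (Finset.range (supply T x + 1)) ⟨0, Finset.mem_range.mpr (Nat.succ_pos _)⟩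
    (fun k => sw T v k x)


lemma log_succ_ge_aux (n : ℕ) (hn : 1 ≤ n) :
    1/((n:ℝ)+1) ≤ Real.log ((n:ℝ)+1) - Real.log n := by
  have hn0 : (0:ℝ) < n := by exact_mod_cast hn
  have h1 : (0:ℝ) < (n:ℝ)/((n:ℝ)+1) := by positivity
  have h := Real.log_le_sub_one_of_pos h1
  rw [Real.log_div (by positivity) (by positivity)] at h
  have h2 : (n:ℝ)/((n:ℝ)+1) - 1 = -(1/((n:ℝ)+1)) := by field_simp; ring
  linarith [h2 ▸ h]

lemma sum_inv_le_log_aux (c : ℕ) (hc : 1 ≤ c) : ∀ n, c ≤ n →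
    ∑ j ∈ Finset.Ioc c n, (1:ℝ)/j ≤ Real.log n - Real.log c := by
  intro n
  induction n with
  | zero => intro h; interval_cases c
  | succ n ih =>
    intro h
    rcases Nat.lt_or_ge c (n+1) with hlt | hge
    · have hcn : c ≤ n := by omega
      rw [Finset.sum_Ioc_succ_top hcn]
      have hn1 : 1 ≤ n := by omega
      have h1 := log_succ_ge_aux n hn1
      have h2 := ih hcn
      push_cast
      linarith
    · have hceq : c = n+1 := by omega
      subst hceq
      simp

lemma c_log_le_aux (c T : ℕ) (hc : 1 ≤ c) (hcT : c ≤ T) :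
    (c:ℝ) * (Real.log T - Real.log c) ≤ T / Real.exp 1 := by
  have hc0 : (0:ℝ) < c := by exact_mod_cast hc
  have hT0 : (0:ℝ) < T := by exact_mod_cast (hc.trans hcT)
  have he : (0:ℝ) < Real.exp 1 := Real.exp_pos 1
  have hy : (0:ℝ) < (T:ℝ)/((c:ℝ)*Real.exp 1) := by positivity
  have h := Real.log_le_sub_one_of_pos hy
  rw [Real.log_div (by positivity) (by positivity), Real.log_mul (by positivity) (by positivity),
    Real.log_exp] at h
  have h2 : Real.log T - Real.log c ≤ (T:ℝ)/((c:ℝ)*Real.exp 1) := by linarith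
  have h3 : (c:ℝ) * ((T:ℝ)/((c:ℝ)*Real.exp 1)) = T / Real.exp 1 := by field_simp
  calc (c:ℝ) * (Real.log T - Real.log c) ≤ (c:ℝ) * ((T:ℝ)/((c:ℝ)*Real.exp 1)) :=
        mul_le_mul_of_nonneg_left h2 hc0.le
    _ = T / Real.exp 1 := h3

lemma reindex_aux (f : ℕ → ℝ) (k T : ℕ) (hk : k ≤ T) :
    ∑ m ∈ Finset.Icc 1 (T-k), f m = ∑ j ∈ Finset.Ioc k T, f (T - j + 1) := by
  apply Finset.sum_nbij' (i := fun m => T - m + 1) (j := fun j => T - j + 1)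
  · intro a ha; simp only [Finset.mem_Icc] at ha; simp only [Finset.mem_Ioc]; omega
  · intro a ha; simp only [Finset.mem_Ioc] at ha; simp only [Finset.mem_Icc]; omega
  · intro a ha; simp only [Finset.mem_Icc] at ha; omega
  · intro a ha; simp only [Finset.mem_Ioc] at ha; omega
  · intro a ha; simp only [Finset.mem_Icc] at ha; congr 1; omega

/-- Price of anarchy lower bound: if buyer 1 is a strict monopsonist at the initial
node, every allocation awarding her at least her greedy demand achieves social
welfare at least `(1 - 1/e)` times the optimum. -/
theorem stmt18 (T : ℕ) (v : Fin 2 → ℕ → ℝ) (hv : Admissible v) (hT : 1 ≤ T)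
    (hmono : df T v 0 (0 : Fin 2 → ℕ) = T) :
    opt T v (0 : Fin 2 → ℕ) = (∑ i ∈ Finset.Icc 1 T, v 0 i) ∧
    (∀ k : ℕ, gd T v 0 (0 : Fin 2 → ℕ) ≤ k → k ≤ T →
      (1 - 1 / Real.exp 1) * (∑ i ∈ Finset.Icc 1 T, v 0 i)
        ≤ (∑ i ∈ Finset.Icc 1 k, v 0 i) + (∑ i ∈ Finset.Icc 1 (T - k), v 1 i)) := by
  have hanti : ∀ i : Fin 2, Antitone (v i) := fun i => antitone_nat_of_succ_le (fun n => (hv i n).2)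
  have hpos : ∀ (i : Fin 2) (k : ℕ), 0 ≤ v i k := fun i k => (hv i k).1
  have hsupp : supply T (0 : Fin 2 → ℕ) = T := by simp [supply]
  have hIoc : ∀ n : ℕ, Finset.Icc 1 n = Finset.Ioc 0 n := fun n => Finset.Icc_add_one_left_eq_Ioc 0 n
  -- monopsony
  have hdf : df T v 0 (0:Fin 2→ℕ) = sSup {k | 1 ≤ k ∧ k ≤ T ∧ v 1 (T - k + 1) < v 0 k} := by
    simp [df, _root_.val, other, supply]
  rw [hdf] at hmono
  have hbdd : BddAbove {k | 1 ≤ k ∧ k ≤ T ∧ v 1 (T - k + 1) < v 0 k} :=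
    ⟨T, fun k hk => hk.2.1⟩
  have hSne : {k | 1 ≤ k ∧ k ≤ T ∧ v 1 (T - k + 1) < v 0 k}.Nonempty := by
    by_contra hSe
    rw [Set.not_nonempty_iff_eq_empty] at hSe
    rw [hSe] at hmono
    simp at hmono
    omega
  have hTmem : T ∈ {k | 1 ≤ k ∧ k ≤ T ∧ v 1 (T - k + 1) < v 0 k} := by
    have h := Nat.sSup_mem hSne hbdd
    rwa [hmono] at h
  have hv11 : v 1 1 < v 0 T := by
    have := hTmem.2.2
    simpa [Nat.sub_self] using this
  have hMon : ∀ k : ℕ, 1 ≤ k → k ≤ T → v 1 (T - k + 1) < v 0 k := by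
    intro k h1 h2
    calc v 1 (T - k + 1) ≤ v 1 1 := hanti 1 (by omega)
      _ < v 0 T := hv11
      _ ≤ v 0 k := hanti 0 h2
  -- greedy payoff/demand facts
  have hgbar : ∀ k : ℕ, gbar T v 0 k (0:Fin 2→ℕ)
      = (∑ j ∈ Finset.Icc 1 k, v 0 j) - (k:ℝ) * v 1 (T - k + 1) := by
    intro k
    simp [gbar, _root_.val, other, supply]
  obtain ⟨m, hmmem, hmeq⟩ := Finset.exists_mem_eq_sup'
    (Finset.nonempty_range_add_one (n := supply T (0:Fin 2→ℕ)))
    (fun k => gbar T v 0 k (0:Fin 2→ℕ))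
  have hcmem : gd T v 0 (0:Fin 2→ℕ) ∈
      {k | k ≤ supply T (0:Fin 2→ℕ) ∧ gbar T v 0 k (0:Fin 2→ℕ) = gu T v 0 (0:Fin 2→ℕ)} := by
    apply Nat.sInf_mem
    refine ⟨m, ?_, ?_⟩
    · rw [Finset.mem_range] at hmmem; omega
    · exact hmeq.symm
  set c := gd T v 0 (0:Fin 2→ℕ) with hcdef
  have hcT : c ≤ T := by have := hcmem.1; rwa [hsupp] at this
  have hmax : ∀ j : ℕ, j ≤ T →
      (∑ i ∈ Finset.Icc 1 j, v 0 i) - (j:ℝ) * v 1 (T - j + 1)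
        ≤ (∑ i ∈ Finset.Icc 1 c, v 0 i) - (c:ℝ) * v 1 (T - c + 1) := by
    intro j hj
    rw [← hgbar j, ← hgbar c, hcmem.2]
    have hjmem : j ∈ Finset.range (supply T (0:Fin 2→ℕ) + 1) := by
      rw [Finset.mem_range, hsupp]; omega
    unfold gu
    exact Finset.le_sup' (fun k => gbar T v 0 k (0:Fin 2→ℕ)) hjmem
  -- social welfare facts
  have hsw : ∀ k : ℕ, sw T v k (0:Fin 2→ℕ)
      = (∑ j ∈ Finset.Icc 1 k, v 0 j) + (∑ j ∈ Finset.Icc 1 (T - k), v 1 j) := by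
    intro k
    simp [sw, _root_.val, supply]
  have hV2 : ∀ k : ℕ, k ≤ T →
      (∑ j ∈ Finset.Icc 1 (T - k), v 1 j) = ∑ j ∈ Finset.Ioc k T, v 1 (T - j + 1) :=
    fun k hk => reindex_aux (v 1) k T hk
  have hsplitW : ∀ a b : ℕ, a ≤ b →
      (∑ j ∈ Finset.Icc 1 a, v 0 j) + (∑ j ∈ Finset.Ioc a b, v 0 j)
        = ∑ j ∈ Finset.Icc 1 b, v 0 j := by
    intro a b h
    rw [hIoc, hIoc]
    exact Finset.sum_Ioc_consecutive _ (Nat.zero_le a) h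
  have hWnn : ∀ n : ℕ, 0 ≤ ∑ j ∈ Finset.Icc 1 n, v 0 j :=
    fun n => Finset.sum_nonneg (fun i _ => hpos 0 i)
  -- Part 1
  have hswle : ∀ k : ℕ, k ≤ T → sw T v k (0:Fin 2→ℕ) ≤ ∑ j ∈ Finset.Icc 1 T, v 0 j := by
    intro k hk
    rw [hsw k, hV2 k hk]
    have h1 : ∑ j ∈ Finset.Ioc k T, v 1 (T - j + 1) ≤ ∑ j ∈ Finset.Ioc k T, v 0 j := by
      apply Finset.sum_le_sum
      intro j hj
      rw [Finset.mem_Ioc] at hj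
      exact (hMon j (by omega) hj.2).le
    have h2 := hsplitW k T hk
    linarith
  have hopt : opt T v (0:Fin 2→ℕ) = ∑ j ∈ Finset.Icc 1 T, v 0 j := by
    apply le_antisymm
    · apply Finset.sup'_le
      intro k hk
      rw [Finset.mem_range, hsupp] at hk
      exact hswle k (by omega)
    · have hT0 : ∑ j ∈ Finset.Icc 1 T, v 0 j = sw T v T (0:Fin 2→ℕ) := by
        rw [hsw T]; simp
      rw [hT0]
      have hTmem2 : T ∈ Finset.range (supply T (0:Fin 2→ℕ) + 1) := by
        rw [Finset.mem_range, hsupp]; omega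
      unfold opt
      exact Finset.le_sup' (fun k => sw T v k (0:Fin 2→ℕ)) hTmem2
  refine ⟨hopt, ?_⟩
  -- Part 2
  intro k hk1 hk2
  rw [hV2 k hk2]
  have hstepi : (∑ j ∈ Finset.Icc 1 c, v 0 j) + (∑ j ∈ Finset.Ioc c T, v 1 (T - j + 1))
      ≤ (∑ j ∈ Finset.Icc 1 k, v 0 j) + (∑ j ∈ Finset.Ioc k T, v 1 (T - j + 1)) := by
    have hsplW := hsplitW c k hk1
    have hsplp : (∑ j ∈ Finset.Ioc c k, v 1 (T - j + 1))
        + (∑ j ∈ Finset.Ioc k T, v 1 (T - j + 1))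
        = ∑ j ∈ Finset.Ioc c T, v 1 (T - j + 1) :=
      Finset.sum_Ioc_consecutive _ hk1 hk2
    have hle : ∑ j ∈ Finset.Ioc c k, v 1 (T - j + 1) ≤ ∑ j ∈ Finset.Ioc c k, v 0 j := by
      apply Finset.sum_le_sum
      intro j hj
      rw [Finset.mem_Ioc] at hj
      exact (hMon j (by omega) (by omega)).le
    linarith
  refine le_trans ?_ hstepi
  -- main inequality at c
  rcases eq_or_lt_of_le hcT with hceq | hclt
  · -- c = T
    rw [hceq, Finset.Ioc_self, Finset.sum_empty]
    have h1e : (0:ℝ) < 1 / Real.exp 1 := by positivity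
    nlinarith [hWnn T]
  · -- c < T
    have hTc : (0:ℝ) < (T:ℝ) - c := by
      have : (c:ℝ) < T := by exact_mod_cast hclt
      linarith
    have hcnn : (0:ℝ) ≤ (c:ℝ) := by positivity
    have hE : (0:ℝ) < Real.exp 1 := Real.exp_pos 1
    -- D j = sum over Ioc c j of v 0
    have hDnn : ∀ j : ℕ, 0 ≤ ∑ i ∈ Finset.Ioc c j, v 0 i :=
      fun j => Finset.sum_nonneg (fun i _ => hpos 0 i)
    have hWD : ∀ j : ℕ, c ≤ j →
        (∑ i ∈ Finset.Icc 1 c, v 0 i) + (∑ i ∈ Finset.Ioc c j, v 0 i)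
          = ∑ i ∈ Finset.Icc 1 j, v 0 i := fun j hj => hsplitW c j hj
    have hpnn : ∀ j : ℕ, 0 ≤ v 1 (T - j + 1) := fun j => hpos 1 _
    -- h1 : D j ≤ j * p j
    have h1 : ∀ j ∈ Finset.Ioc c T,
        (∑ i ∈ Finset.Ioc c j, v 0 i) ≤ (j:ℝ) * v 1 (T - j + 1) := by
      intro j hj
      rw [Finset.mem_Ioc] at hj
      have hA := hmax j hj.2
      have hB := hWD j hj.1.le
      have hC : (0:ℝ) ≤ (c:ℝ) * v 1 (T - c + 1) := by
        have := hpnn c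
        positivity
      linarith
    -- bounds via decreasingness
    have hub : ∀ a b : ℕ, a ≤ b →
        (∑ i ∈ Finset.Ioc a b, v 0 i) ≤ ((b:ℝ) - a) * v 0 (a+1) := by
      intro a b hab
      have := Finset.sum_le_card_nsmul (Finset.Ioc a b) (v 0) (v 0 (a+1))
        (fun i hi => hanti 0 (by rw [Finset.mem_Ioc] at hi; omega))
      rw [Nat.card_Ioc, nsmul_eq_mul] at this
      rwa [Nat.cast_sub hab] at this
    have hlb : ∀ a b : ℕ, a ≤ b →
        ((b:ℝ) - a) * v 0 (b+1) ≤ ∑ i ∈ Finset.Ioc a b, v 0 i := by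
      intro a b hab
      have := Finset.card_nsmul_le_sum (Finset.Ioc a b) (v 0) (v 0 (b+1))
        (fun i hi => hanti 0 (by rw [Finset.mem_Ioc] at hi; omega))
      rw [Nat.card_Ioc, nsmul_eq_mul] at this
      rwa [Nat.cast_sub hab] at this
    -- h2 : concavity
    have h2 : ∀ j ∈ Finset.Ioc c T,
        ((j:ℝ) - c) * (∑ i ∈ Finset.Ioc c T, v 0 i)
          ≤ ((T:ℝ) - c) * (∑ i ∈ Finset.Ioc c j, v 0 i) := by
      intro j hj
      rw [Finset.mem_Ioc] at hj
      obtain ⟨hcj, hjT⟩ := hj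
      have hsplit : (∑ i ∈ Finset.Ioc c j, v 0 i) + (∑ i ∈ Finset.Ioc j T, v 0 i)
          = ∑ i ∈ Finset.Ioc c T, v 0 i := Finset.sum_Ioc_consecutive _ hcj.le hjT
      have hA : (∑ i ∈ Finset.Ioc j T, v 0 i) ≤ ((T:ℝ) - j) * v 0 (j+1) := hub j T hjT
      have hB : ((j:ℝ) - c) * v 0 (j+1) ≤ ∑ i ∈ Finset.Ioc c j, v 0 i := hlb c j hcj.le
      have hjc : (0:ℝ) ≤ (j:ℝ) - c := by
        have : (c:ℝ) ≤ j := by exact_mod_cast hcj.le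
        linarith
      have hTj : (0:ℝ) ≤ (T:ℝ) - j := by
        have : (j:ℝ) ≤ T := by exact_mod_cast hjT
        linarith
      nlinarith [mul_le_mul_of_nonneg_left hA hjc, mul_le_mul_of_nonneg_left hB hTj]
    -- h3
    have h3 : (c:ℝ) * (∑ i ∈ Finset.Ioc c T, v 0 i)
        ≤ ((T:ℝ) - c) * (∑ i ∈ Finset.Icc 1 c, v 0 i) := by
      have hA : (∑ i ∈ Finset.Ioc c T, v 0 i) ≤ ((T:ℝ) - c) * v 0 (c+1) := hub c T hcT
      have hB : (c:ℝ) * v 0 (c+1) ≤ ∑ i ∈ Finset.Icc 1 c, v 0 i := by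
        have := hlb 0 c (Nat.zero_le c)
        rw [← hIoc c] at this
        simpa using this
      nlinarith [mul_le_mul_of_nonneg_left hA hcnn, mul_le_mul_of_nonneg_left hB hTc.le]
    -- h4
    have h4 : ∀ j ∈ Finset.Ioc c T,
        (1 - (c:ℝ)/j) * (∑ i ∈ Finset.Ioc c T, v 0 i)
          ≤ ((T:ℝ) - c) * v 1 (T - j + 1) := by
      intro j hj
      have h1j := h1 j hj
      have h2j := h2 j hj
      rw [Finset.mem_Ioc] at hj
      have hj0 : (0:ℝ) < j := by
        have : (0:ℕ) < j := by omega
        exact_mod_cast this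
      have key : ((j:ℝ) - c) * (∑ i ∈ Finset.Ioc c T, v 0 i)
          ≤ (j:ℝ) * (((T:ℝ) - c) * v 1 (T - j + 1)) := by
        nlinarith [mul_le_mul_of_nonneg_left h1j hTc.le]
      have heq : 1 - (c:ℝ)/j = ((j:ℝ) - c)/j := by field_simp
      rw [heq, div_mul_eq_mul_div, div_le_iff₀ hj0]
      linarith
    -- sum of h4
    have hS1 : ∑ j ∈ Finset.Ioc c T, (1 - (c:ℝ)/j)
        = ((T:ℝ) - c) - c * (∑ j ∈ Finset.Ioc c T, (1:ℝ)/j) := by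
      rw [Finset.sum_sub_distrib, Finset.sum_const, Nat.card_Ioc, nsmul_eq_mul, mul_one,
        Nat.cast_sub hcT]
      have : ∑ j ∈ Finset.Ioc c T, (c:ℝ)/j = c * ∑ j ∈ Finset.Ioc c T, (1:ℝ)/j := by
        rw [Finset.mul_sum]
        exact Finset.sum_congr rfl (fun j _ => by rw [mul_one_div])
      rw [this]
    have hsum : (((T:ℝ) - c) - c * (∑ j ∈ Finset.Ioc c T, (1:ℝ)/j))
          * (∑ i ∈ Finset.Ioc c T, v 0 i)
        ≤ ((T:ℝ) - c) * ∑ j ∈ Finset.Ioc c T, v 1 (T - j + 1) := by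
      calc (((T:ℝ) - c) - c * (∑ j ∈ Finset.Ioc c T, (1:ℝ)/j))
            * (∑ i ∈ Finset.Ioc c T, v 0 i)
          = ∑ j ∈ Finset.Ioc c T, (1 - (c:ℝ)/j) * (∑ i ∈ Finset.Ioc c T, v 0 i) := by
            rw [← Finset.sum_mul, hS1]
        _ ≤ ∑ j ∈ Finset.Ioc c T, ((T:ℝ) - c) * v 1 (T - j + 1) := Finset.sum_le_sum h4
        _ = ((T:ℝ) - c) * ∑ j ∈ Finset.Ioc c T, v 1 (T - j + 1) := by rw [Finset.mul_sum]
    -- h5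
    have h5 : (c:ℝ) * (∑ j ∈ Finset.Ioc c T, (1:ℝ)/j) ≤ (T:ℝ) / Real.exp 1 := by
      rcases Nat.eq_zero_or_pos c with hc0 | hc1
      · rw [hc0]
        simp
        positivity
      · calc (c:ℝ) * (∑ j ∈ Finset.Ioc c T, (1:ℝ)/j)
            ≤ (c:ℝ) * (Real.log T - Real.log c) :=
              mul_le_mul_of_nonneg_left (sum_inv_le_log_aux c hc1 T hcT) hcnn
          _ ≤ (T:ℝ) / Real.exp 1 := c_log_le_aux c T hc1 hcT
    -- assemble
    have hWT := hWD T hcT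
    rw [← hWT, ← mul_le_mul_iff_right₀ hTc]
    have hx1 : (c:ℝ) * (∑ j ∈ Finset.Ioc c T, (1:ℝ)/j) * (∑ i ∈ Finset.Ioc c T, v 0 i)
        ≤ (T:ℝ) / Real.exp 1 * (∑ i ∈ Finset.Ioc c T, v 0 i) :=
      mul_le_mul_of_nonneg_right h5 (hDnn T)
    have hx2 : 1 / Real.exp 1 * ((c:ℝ) * (∑ i ∈ Finset.Ioc c T, v 0 i))
        ≤ 1 / Real.exp 1 * (((T:ℝ) - c) * (∑ i ∈ Finset.Icc 1 c, v 0 i)) :=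
      mul_le_mul_of_nonneg_left h3 (by positivity)
    have hfe : (T:ℝ) / Real.exp 1 = (T:ℝ) * (1 / Real.exp 1) := by ring
    rw [hfe] at hx1
    linarith [hsum, hx1, hx2, hWT]
end
end
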